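/- arXiv:math/9603206 — 2 statements merged into one kernel-verified Lean document; each statement's English description precedes it below -/
import Mathlib

section
/- (GCH lower bound) Assume GCH. If λ is a singular strong limit cardinal of cofinality ω, then d_{<ℵ₁}(λ) ≥ λ⁺; combined with the upper bound, d_{<ℵ₁}(λ) = λ⁺ under GCH. -/
open Cardinal

noncomputable def boxDensity (κ lam : Cardinal.{0}) : Cardinal.{0} :=
  sInf { c | ∃ F : Set (Quotient.out lam → Bool), #F = c ∧
    ∀ a : Set (Quotient.out lam), #a < κ → ∀ g : ↥a → Bool,
      ∃ f ∈ F, ∀ x : ↥a, f x.1 = g x }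

/-- The Generalized Continuum Hypothesis. -/
def GCH : Prop := ∀ μ : Cardinal.{0}, ℵ₀ ≤ μ → 2 ^ μ = Order.succ μ

theorem stmt6 (hGCH : GCH) (lam : Cardinal.{0}) (hsl : lam.IsStrongLimit)
    (hsing : ℵ₀ < lam) (hcof : lam.ord.cof = ℵ₀) :
    Order.succ lam ≤ boxDensity (Cardinal.aleph 1) lam ∧
      boxDensity (Cardinal.aleph 1) lam = Order.succ lam := by
  classical
  have hinf : ℵ₀ ≤ lam := hsing.le
  set X := Quotient.out lam with hXdef
  have hX : #X = lam := mk_out lam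
  set S : Set Cardinal.{0} := { c | ∃ F : Set (X → Bool), #F = c ∧
    ∀ a : Set X, #a < Cardinal.aleph 1 → ∀ g : ↥a → Bool,
      ∃ f ∈ F, ∀ x : ↥a, f x.1 = g x } with hSdef
  have hbd : boxDensity (Cardinal.aleph 1) lam = sInf S := rfl
  -- Upper bound: the family of all functions is dense and has size 2^λ = λ⁺.
  have hmem : Order.succ lam ∈ S := by
    refine ⟨Set.univ, ?_, ?_⟩
    · rw [mk_univ, ← Cardinal.power_def, mk_bool, hX, hGCH lam hinf]
    · intro a _ g
      refine ⟨fun x => if h : x ∈ a then g ⟨x, h⟩ else false, Set.mem_univ _, ?_⟩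
      intro x
      exact dif_pos x.2
  -- Lower bound: every dense family has size ≥ λ⁺.
  have hlow : ∀ c ∈ S, Order.succ lam ≤ c := by
    rintro c ⟨F, rfl, hdense⟩
    rw [Order.succ_le_iff]
    by_contra hle
    push_neg at hle
    -- an injection of F into λ.ord.toType
    obtain ⟨j⟩ : Nonempty (↥F ↪ lam.ord.ToType) := by
      rw [← Cardinal.le_def, mk_ord_toType]
      exact hle
    -- a countable unbounded set in λ.ord.toType
    haveI inst : IsWellOrder lam.ord.ToType (· < ·) := isWellOrder_lt
    obtain ⟨T, hTunb, hTcard⟩ : ∃ T : Set lam.ord.ToType, (∀ a, ∃ b ∈ T, ¬ b < a) ∧ #T = ℵ₀ := by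
      obtain ⟨T, hT, hTc⟩ := Order.exists_cof_eq lam.ord.ToType
      refine ⟨T, fun a => ?_, ?_⟩
      · obtain ⟨b, hb, hab⟩ := hT a
        exact ⟨b, hb, not_lt.mpr hab⟩
      · rw [hTc, Ordinal.cof_toType, hcof]
    have : #↥T = #ℕ := by rw [hTcard, mk_nat]
    obtain ⟨e⟩ := Cardinal.eq.mp this
    -- decomposition F = ⋃ₙ Fₙ with #Fₙ < λ
    set Fn : ℕ → Set ↥F := fun n => {f | j f ≤ (e.symm n : lam.ord.ToType)} with hFndef
    have hFnsmall : ∀ n, #(Fn n) < lam := by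
      intro n
      have h1 : #(Fn n) ≤ #(Set.Iic (e.symm n : lam.ord.ToType)) := by
        refine mk_le_of_injective (f := fun f => ⟨j f.1, f.2⟩) ?_
        intro f g hfg
        exact Subtype.ext (j.injective (congrArg Subtype.val hfg))
      have h3 : #(Set.Iio (e.symm n : lam.ord.ToType)) < lam :=
        mk_Iio_ord_toType _
      have h4 : #({(e.symm n : lam.ord.ToType)} : Set _) < lam := by
        rw [mk_singleton]
        exact (one_lt_aleph0).trans_le hinf
      calc #(Fn n) ≤ #(Set.Iic (e.symm n : lam.ord.ToType)) := h1
        _ = #(Set.Iio (e.symm n : lam.ord.ToType) ∪ {(e.symm n : lam.ord.ToType)} : Set _) := by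
            rw [Set.Iio_union_right]
        _ ≤ #(Set.Iio (e.symm n : lam.ord.ToType)) + #({(e.symm n : lam.ord.ToType)} : Set _) :=
            mk_union_le _ _
        _ < lam := Cardinal.add_lt_of_lt hinf h3 h4
    have hcover : ∀ f : ↥F, ∃ n, f ∈ Fn n := by
      intro f
      obtain ⟨y, hyT, hy⟩ := hTunb (j f)
      exact ⟨e ⟨y, hyT⟩, by simpa [hFndef] using not_lt.mp hy⟩
    -- disjoint blocks: X ≃ X × ℕ
    have hXN : #X = #(X × ℕ) := by
      rw [mk_prod, Cardinal.lift_id, Cardinal.lift_id, mk_nat, hX,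
        Cardinal.mul_eq_max hinf le_rfl, max_eq_left hinf]
    obtain ⟨π⟩ := Cardinal.eq.mp hXN
    -- for each n, two distinct points in block n where all of Fₙ agrees
    have key : ∀ n : ℕ, ∃ p : X × X, p.1 ≠ p.2 ∧
        ∀ f : ↥F, f ∈ Fn n → (f : X → Bool) (π.symm (p.1, n)) =
          (f : X → Bool) (π.symm (p.2, n)) := by
      intro n
      set ψ : X → (↥(Fn n) → Bool) := fun x f => (f.1 : X → Bool) (π.symm (x, n)) with hψ
      have hnotinj : ¬ Function.Injective ψ := by
        intro hinj
        have : lam ≤ 2 ^ #(Fn n) := by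
          have := mk_le_of_injective hinj
          rwa [hX, ← Cardinal.power_def, mk_bool] at this
        exact absurd this (not_le.mpr (hsl.two_power_lt (hFnsmall n)))
      rw [Function.not_injective_iff] at hnotinj
      obtain ⟨x, y, hxy, hne⟩ := hnotinj
      exact ⟨(x, y), hne, fun f hf => congrFun hxy ⟨f, hf⟩⟩
    choose p hp1 hp2 using key
    set α : ℕ → X := fun n => π.symm ((p n).1, n) with hα
    set β : ℕ → X := fun n => π.symm ((p n).2, n) with hβ
    have hαβ : ∀ n m, α n ≠ β m := by
      intro n m h
      have h' : ((p n).1, n) = ((p m).2, m) := π.symm.injective h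
      obtain ⟨h1, h2⟩ := Prod.mk.injEq _ _ _ _ ▸ h'
      subst h2
      exact hp1 n (h1 ▸ rfl)
    -- the diagonal countable partial function
    set A : Set X := Set.range α ∪ Set.range β with hA
    have hAcard : #A < Cardinal.aleph 1 := by
      have : #A ≤ ℵ₀ := by
        refine (mk_union_le _ _).trans ?_
        have h1 := mk_range_le (f := α)
        have h2 := mk_range_le (f := β)
        rw [mk_nat] at h1 h2
        calc #(Set.range α) + #(Set.range β) ≤ ℵ₀ + ℵ₀ := add_le_add h1 h2
          _ = ℵ₀ := Cardinal.aleph0_add_aleph0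
      refine this.trans_lt ?_
      rw [← Cardinal.aleph_zero]
      exact Cardinal.aleph_lt_aleph.mpr zero_lt_one
    set g : ↥A → Bool := fun x => if ∃ n, β n = (x : X) then true else false with hg
    obtain ⟨f, hfF, hfg⟩ := hdense A hAcard g
    obtain ⟨n, hn⟩ := hcover ⟨f, hfF⟩
    have hmemα : α n ∈ A := Or.inl ⟨n, rfl⟩
    have hmemβ : β n ∈ A := Or.inr ⟨n, rfl⟩
    have h1 : f (α n) = g ⟨α n, hmemα⟩ := hfg ⟨α n, hmemα⟩
    have h2 : f (β n) = g ⟨β n, hmemβ⟩ := hfg ⟨β n, hmemβ⟩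
    have h3 : f (α n) = f (β n) := hp2 n ⟨f, hfF⟩ hn
    have hgα : g ⟨α n, hmemα⟩ = false := by
      have hne : ¬ ∃ m, β m = α n := by
        rintro ⟨m, hm⟩
        exact hαβ n m hm.symm
      exact if_neg hne
    have hgβ : g ⟨β n, hmemβ⟩ = true := by
      rw [hg]
      exact if_pos ⟨n, rfl⟩
    rw [h1, hgα] at h3
    exact Bool.false_ne_true (h3.trans (h2.trans hgβ))
  have hge : Order.succ lam ≤ boxDensity (Cardinal.aleph 1) lam := by
    rw [hbd]
    exact le_csInf ⟨_, hmem⟩ hlow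
  have hle : boxDensity (Cardinal.aleph 1) lam ≤ Order.succ lam := by
    rw [hbd]
    exact csInf_le' hmem
  exact ⟨hge, le_antisymm hle hge⟩
end

section
/- Assume GCH holds and let κ be an infinite cardinal. For any set A with |A| = κ⁺⁺, the space ^A κ of functions from A to κ with the topology generated by countable box products (basic open sets determined by fixing values on a countable subset of A) has a dense subset of cardinality κ⁺. -/
open Cardinal

/-- The countable-box topology on `^A κ`: generated by the cylinders on countable
subsets of `A`. -/
noncomputable def ctbleBoxTopology (A : Type) (K : Type) : TopologicalSpace (A → K) :=
  TopologicalSpace.generateFrom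
    { s | ∃ (a : Set A) (g : ↥a → K), #a ≤ ℵ₀ ∧ s = { f | ∀ x : ↥a, f x.1 = g x } }

section EK

open scoped Classical in
/-- The Engelking–Karłowicz style function associated to data `(π, σ, e)`. -/
noncomputable def ekFun {A K L : Type} [Nonempty K] (ι : A ↪ Set L)
    (π : ℕ → L) (σ : ℕ → ℕ → Prop) (e : ℕ → K) : A → K :=
  fun a => if h : ∃ n, ∀ i, ((π i ∈ ι a) = σ n i) then e h.choose else Classical.arbitrary K

theorem ekFun_spec {A K L : Type} [Nonempty K] [Nonempty L] (ι : A ↪ Set L)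
    (f0 : A → K) (u : ℕ → A) :
    ∃ (π : ℕ → L) (σ : ℕ → ℕ → Prop) (e : ℕ → K),
      ∀ m, ekFun ι π σ e (u m) = f0 (u m) := by
  classical
  -- separating points
  set sep : ℕ → ℕ → L := fun n m =>
    if h : ∃ x, ¬((x ∈ ι (u n)) ↔ (x ∈ ι (u m))) then h.choose else Classical.arbitrary L
    with hsep
  set π : ℕ → L := fun k => sep (Nat.unpair k).1 (Nat.unpair k).2 with hπ
  set σ : ℕ → ℕ → Prop := fun n i => (π i ∈ ι (u n)) with hσ
  set e : ℕ → K := fun n => f0 (u n) with he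
  refine ⟨π, σ, e, fun m => ?_⟩
  have hex : ∃ n, ∀ i, ((π i ∈ ι (u m)) = σ n i) := ⟨m, fun i => rfl⟩
  have : ekFun ι π σ e (u m) = e hex.choose := by
    rw [ekFun]
    exact dif_pos hex
  rw [this]
  set n₀ := hex.choose with hn₀
  have hspec := hex.choose_spec
  -- show ι (u n₀) = ι (u m)
  have hsets : ι (u n₀) = ι (u m) := by
    by_contra hne
    have hx : ∃ x, ¬((x ∈ ι (u n₀)) ↔ (x ∈ ι (u m))) := by
      by_contra hforall
      push_neg at hforall
      exact hne (Set.ext hforall)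
    set k := Nat.pair n₀ m with hk
    have hπk : π k = sep n₀ m := by
      simp [hπ, hk, Nat.unpair_pair]
    have hsepval : sep n₀ m = hx.choose := by
      rw [hsep]; exact dif_pos hx
    have hchoice := hx.choose_spec
    have hagree : (π k ∈ ι (u m)) = (π k ∈ ι (u n₀)) := hspec k
    rw [hπk, hsepval] at hagree
    exact hchoice (iff_of_eq hagree.symm)
  have : u n₀ = u m := ι.injective hsets
  exact congrArg f0 this

end EK

theorem stmt14 (hGCH : GCH) (κ : Cardinal.{0}) (hκ : ℵ₀ ≤ κ) (A : Type)
    (hA : #A = Order.succ (Order.succ κ)) :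
    ∃ F : Set (A → Quotient.out κ), #F = Order.succ κ ∧
      @Dense _ (ctbleBoxTopology A (Quotient.out κ)) F := by
  classical
  set K := Quotient.out κ with hK
  have hmkK : #K = κ := mk_out κ
  have hKinf : ℵ₀ ≤ #K := by rw [hmkK]; exact hκ
  haveI : Nonempty K := by
    have : #K ≠ 0 := by rw [hmkK]; exact (aleph0_pos.trans_le hκ).ne'
    exact mk_ne_zero_iff.mp this
  set κ1 : Cardinal.{0} := Order.succ κ with hκ1
  set L := Quotient.out κ1 with hL
  have hmkL : #L = Order.succ κ := mk_out _
  haveI : Nonempty L := by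
    have : #L ≠ 0 := by
      rw [hmkL]
      exact (aleph0_pos.trans_le (hκ.trans (Order.le_succ κ))).ne'
    exact mk_ne_zero_iff.mp this
  have hsucc1 : ℵ₀ ≤ Order.succ κ := hκ.trans (Order.le_succ κ)
  have h2κ : (2 : Cardinal) ^ κ = Order.succ κ := hGCH κ hκ
  have h2κ1 : (2 : Cardinal) ^ (Order.succ κ) = Order.succ (Order.succ κ) := hGCH _ hsucc1
  -- embedding of A into Set L
  have hAle : #A ≤ #(Set L) := by
    rw [hA, mk_set, hmkL, h2κ1]
  obtain ⟨ι⟩ := (Cardinal.le_def A (Set L)).mp hAle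
  -- the EK family
  set F0 : Set (A → K) :=
    Set.range (fun p : (ℕ → L) × (ℕ → ℕ → Prop) × (ℕ → K) => ekFun ι p.1 p.2.1 p.2.2)
    with hF0
  -- cardinality bound for F0
  have hpow : ∀ c : Cardinal.{0}, c ≤ Order.succ κ → c ^ ℵ₀ ≤ Order.succ κ := by
    intro c hc
    calc c ^ ℵ₀ ≤ ((2 : Cardinal) ^ κ) ^ ℵ₀ := by
          apply power_le_power_right; rw [h2κ]; exact hc
      _ = (2 : Cardinal) ^ (κ * ℵ₀) := by rw [← power_mul]
      _ = (2 : Cardinal) ^ κ := by rw [mul_aleph0_eq hκ]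
      _ = Order.succ κ := h2κ
  have hF0le : #F0 ≤ Order.succ κ := by
    refine (mk_range_le).trans ?_
    have h1 : #(ℕ → L) ≤ Order.succ κ := by
      rw [mk_arrow]
      simp only [lift_id, mk_nat, hmkL]
      exact hpow _ le_rfl
    have h2 : #(ℕ → ℕ → Prop) ≤ Order.succ κ := by
      have hP : #(ℕ → Prop) ≤ Order.succ κ := by
        rw [mk_arrow]
        simp only [lift_id, mk_nat, mk_Prop]
        exact hpow 2 (le_trans (by exact_mod_cast (Cardinal.nat_lt_aleph0 2).le) hsucc1)
      rw [mk_arrow]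
      simp only [lift_id, mk_nat]
      calc #(ℕ → Prop) ^ ℵ₀ ≤ (Order.succ κ) ^ ℵ₀ := power_le_power_right hP
        _ ≤ Order.succ κ := hpow _ le_rfl
    have h3 : #(ℕ → K) ≤ Order.succ κ := by
      rw [mk_arrow]
      simp only [lift_id, mk_nat, hmkK]
      exact hpow κ (Order.le_succ κ)
    calc #((ℕ → L) × (ℕ → ℕ → Prop) × (ℕ → K))
        = #(ℕ → L) * (#(ℕ → ℕ → Prop) * #(ℕ → K)) := by
          rw [mk_prod, mk_prod]; simp [lift_id]
      _ ≤ Order.succ κ * (Order.succ κ * Order.succ κ) := by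
          gcongr
      _ = Order.succ κ := by
          rw [mul_eq_self hsucc1, mul_eq_self hsucc1]
  -- key approximation lemma
  have hkey : ∀ (f0 : A → K) (a : Set A), a.Countable →
      ∃ f ∈ F0, ∀ x ∈ a, f x = f0 x := by
    intro f0 a hca
    rcases a.eq_empty_or_nonempty with rfl | hne
    · exact ⟨ekFun ι (fun _ => Classical.arbitrary L) (fun _ _ => True)
        (fun _ => Classical.arbitrary K), ⟨⟨_, _, _⟩, rfl⟩, fun x hx => absurd hx (by simp)⟩
    · obtain ⟨u, hu⟩ := hca.exists_eq_range hne
      obtain ⟨π, σ, e, hπσe⟩ := ekFun_spec ι f0 u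
      refine ⟨ekFun ι π σ e, ⟨⟨π, σ, e⟩, rfl⟩, fun x hx => ?_⟩
      rw [hu] at hx
      obtain ⟨m, rfl⟩ := hx
      exact hπσe m
  -- density of F0
  letI t := ctbleBoxTopology A K
  have hbasis := TopologicalSpace.isTopologicalBasis_of_subbasis
    (rfl : t = TopologicalSpace.generateFrom _)
  have hdenseF0 : @Dense _ t F0 := by
    rw [hbasis.dense_iff]
    rintro o ⟨T, ⟨hTfin, hTsub⟩, rfl⟩ ⟨f0, hf0⟩
    -- the union of the supports
    choose av gv hcv hsv using fun v : T => hTsub v.2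
    set a : Set A := ⋃ v : T, av v with ha
    have hca : a.Countable := by
      haveI : Countable T := hTfin.countable
      exact Set.countable_iUnion fun v => mk_le_aleph0_iff.mp (hcv v)
    obtain ⟨f, hfF0, hf⟩ := hkey f0 a hca
    refine ⟨f, ?_, hfF0⟩
    rw [Set.mem_sInter]
    intro v hv
    have hf0v : f0 ∈ v := (Set.mem_sInter.mp hf0) v hv
    have hveq : v = {f | ∀ x : ↥(av ⟨v, hv⟩), f x.1 = gv ⟨v, hv⟩ x} := hsv ⟨v, hv⟩
    rw [hveq] at hf0v ⊢
    intro x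
    have hxa : (x : A) ∈ a := Set.mem_iUnion.mpr ⟨⟨v, hv⟩, x.2⟩
    rw [hf x.1 hxa]
    exact hf0v x
  -- pad F0 up to a set of size exactly succ κ
  have hcard : Order.succ κ ≤ #(A → K) := by
    have h1 : Order.succ κ ≤ #A := by
      rw [hA]; exact (Order.le_succ _)
    have h2le : (2 : Cardinal) ≤ #K := by
      rw [hmkK]
      exact le_trans (by exact_mod_cast (Cardinal.nat_lt_aleph0 2).le) hκ
    have h2 : #A ≤ #(A → K) := by
      calc #A ≤ 2 ^ #A := (Cardinal.cantor _).le
        _ ≤ #K ^ #A := power_le_power_right h2le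
        _ = #(A → K) := by rw [mk_arrow]; simp
    exact h1.trans h2
  obtain ⟨S, hS⟩ := Cardinal.le_mk_iff_exists_set.mp hcard
  refine ⟨F0 ∪ S, ?_, hdenseF0.mono Set.subset_union_left⟩
  apply le_antisymm
  · calc #(F0 ∪ S : Set (A → K)) ≤ #F0 + #S := mk_union_le _ _
      _ ≤ Order.succ κ + Order.succ κ := by rw [hS]; exact add_le_add_left hF0le _
      _ = Order.succ κ := add_eq_self hsucc1
  · rw [hκ1, ← hS]
    exact mk_le_mk_of_subset Set.subset_union_right
end
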